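/- In an oriented matroid (U, L), the tope graph is an antipodal partial cube: it is an isometric subgraph of the hypercube {±1}^U in which every tope T has its negation −T also a tope, and −T is the antipode of T. -/

import Mathlib

open Finset
open scoped Classical

variable {U : Type*}

/-- Hamming distance between two vertices of the hypercube `U → Bool`. -/
def hDist [Fintype U] [DecidableEq U] (x y : U → Bool) : ℕ :=
  (Finset.univ.filter fun i => x i ≠ y i).card

/-- The hypercube graph on `U → Bool`: two vertices are adjacent iff they differ
in exactly one coordinate. -/
def cubeGraph (U : Type*) [Fintype U] [DecidableEq U] : SimpleGraph (U → Bool) where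
  Adj x y := hDist x y = 1
  symm := by
    constructor
    intro x y h
    have hs : (Finset.univ.filter fun i => y i ≠ x i) =
        (Finset.univ.filter fun i => x i ≠ y i) := by
      apply Finset.filter_congr
      intro i _
      exact ne_comm
    simpa [hDist, hs] using h
  loopless := by
    constructor
    intro x h
    simp [hDist] at h

/-- Distance between `x` and `y` inside the subgraph of the hypercube induced by `A`
(`0` if one of them is not in `A`). -/
noncomputable def dIn [Fintype U] [DecidableEq U] (A : Set (U → Bool)) (x y : U → Bool) : ℕ :=
  if h : x ∈ A ∧ y ∈ A then ((cubeGraph U).induce A).dist ⟨x, h.1⟩ ⟨y, h.2⟩ else 0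

/-- A set of vertices of the hypercube is a partial cube if its induced graph is connected
and the induced graph distance coincides with the Hamming distance
(i.e. it is an isometric subgraph of the hypercube). -/
def IsPartialCube [Fintype U] [DecidableEq U] (A : Set (U → Bool)) : Prop :=
  ((cubeGraph U).induce A).Connected ∧ ∀ x ∈ A, ∀ y ∈ A, dIn A x y = hDist x y

/-- `A` shatters the coordinate set `X`. -/
def Shatters [Fintype U] [DecidableEq U] (A : Set (U → Bool)) (X : Finset U) : Prop :=
  ∀ g : U → Bool, ∃ a ∈ A, ∀ i ∈ X, a i = g i

/-- `A` strongly shatters `X`: it contains a full subcube over the coordinates `X`. -/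
def StronglyShatters [Fintype U] [DecidableEq U] (A : Set (U → Bool)) (X : Finset U) : Prop :=
  ∃ a : U → Bool, ∀ g : U → Bool, (fun i => if i ∈ X then g i else a i) ∈ A

/-- An ample set family: every shattered set is strongly shattered. -/
def IsAmple [Fintype U] [DecidableEq U] (A : Set (U → Bool)) : Prop :=
  ∀ X : Finset U, Shatters A X → StronglyShatters A X

/-- Composition of sign vectors: `(X ∘ Y) e = X e` if `X e ≠ 0`, else `Y e`. -/
def comp (X Y : U → SignType) : U → SignType := fun e => if X e = 0 then Y e else X e

/-- The support of a sign vector. -/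
def supp (X : U → SignType) : Set U := {e | X e ≠ 0}

/-- The separator of two sign vectors. -/
def sep [Fintype U] [DecidableEq U] (X Y : U → SignType) : Finset U :=
  Finset.univ.filter fun e => X e * Y e = -1

/-- A complex of oriented matroids: face symmetry and strong elimination. -/
structure IsCOM (L : Set (U → SignType)) : Prop where
  fs : ∀ X ∈ L, ∀ Y ∈ L, comp X (-Y) ∈ L
  se : ∀ X ∈ L, ∀ Y ∈ L, ∀ e : U, X e * Y e = -1 →
      ∃ Z ∈ L, Z e = 0 ∧ ∀ f : U, X f * Y f ≠ -1 → Z f = comp X Y f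

/-- An oriented matroid: composition, strong elimination and symmetry. -/
structure IsOM (L : Set (U → SignType)) : Prop where
  c : ∀ X ∈ L, ∀ Y ∈ L, comp X Y ∈ L
  se : ∀ X ∈ L, ∀ Y ∈ L, ∀ e : U, X e * Y e = -1 →
      ∃ Z ∈ L, Z e = 0 ∧ ∀ f : U, X f * Y f ≠ -1 → Z f = comp X Y f
  sym : ∀ X ∈ L, -X ∈ L

/-- A simple system of sign vectors. -/
def SimpleSV (L : Set (U → SignType)) : Prop :=
  (∀ e : U, ∀ s : SignType, ∃ X ∈ L, X e = s) ∧
  ∀ e f : U, e ≠ f → (∃ X ∈ L, X e * X f = 1) ∧ (∃ Y ∈ L, Y e * Y f = -1)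

/-- The topes of a system of sign vectors: the covectors with full support. -/
def Topes (L : Set (U → SignType)) : Set (U → SignType) := {X ∈ L | ∀ e, X e ≠ 0}

/-- Conversion of a (full support) sign vector to a vertex of the hypercube. -/
def tb (X : U → SignType) : U → Bool := fun e => decide (X e = 1)

/-- The vertex set of the tope graph inside the hypercube. -/
def TopeSet (L : Set (U → SignType)) : Set (U → Bool) := tb '' Topes L

/-- The face of a covector `X`. -/
def face (L : Set (U → SignType)) (X : U → SignType) : Set (U → SignType) :=
  {Z | ∃ Y ∈ L, Z = comp X Y}

section Aux

lemma sg_eq_of_mul_ne_neg : ∀ a b : SignType, a ≠ 0 → b ≠ 0 → a * b ≠ -1 → a = b := by decide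

lemma sg_eq_neg_of_mul : ∀ a b : SignType, a * b = -1 → b = -a := by decide

lemma sg_mul_self : ∀ a : SignType, a ≠ 0 → a * a = 1 := by decide

lemma sg_mul_neg_self : ∀ a : SignType, a ≠ 0 → a * (-a) = -1 := by decide

lemma sg_trichotomy : ∀ a b : SignType, b ≠ 0 → a = 0 ∨ a = b ∨ a = -b := by decide

lemma sg_ne_zero_of_mul : ∀ a b : SignType, a * b = -1 → a ≠ 0 := by decide

lemma sg_solve : ∀ a b y z : SignType, a ≠ 0 → b ≠ 0 → y = a → y * z = -(a * b) → z = -b := by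
  decide

lemma sg_neg_ne_zero : ∀ a : SignType, a ≠ 0 → -a ≠ 0 := by decide

lemma tb_ne_iff : ∀ a b : SignType, a ≠ 0 → b ≠ 0 →
    ((decide (a = 1) ≠ decide (b = 1)) ↔ a * b = -1) := by decide

lemma bool_ne_not (x y : Bool) : (x ≠ !y) ↔ x = y := by revert x y; decide

end Aux

section Aux2
set_option linter.unusedSectionVars false

variable {U : Type*} [Fintype U] [DecidableEq U] {L : Set (U → SignType)}

lemma mem_sep_iff {T T' : U → SignType} {f : U} : f ∈ sep T T' ↔ T f * T' f = -1 := by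
  simp [sep]

lemma hDist_eq_sep_card {T T' : U → SignType} (h : ∀ e, T e ≠ 0) (h' : ∀ e, T' e ≠ 0) :
    hDist (tb T) (tb T') = (sep T T').card := by
  unfold hDist sep
  congr 1
  apply Finset.filter_congr
  intro i _
  simpa [tb] using tb_ne_iff (T i) (T' i) (h i) (h' i)

lemma mem_topeset {T : U → SignType} (hT : T ∈ Topes L) : tb T ∈ TopeSet L := ⟨T, hT, rfl⟩

lemma comp_tope (hom : IsOM L) {X T : U → SignType} (hX : X ∈ L) (hT : T ∈ Topes L) :
    comp X T ∈ Topes L := by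
  refine ⟨hom.c X hX T hT.1, fun e => ?_⟩
  unfold comp
  split
  · exact hT.2 e
  · assumption

lemma neg_tope (hom : IsOM L) {T : U → SignType} (hT : T ∈ Topes L) : -T ∈ Topes L :=
  ⟨hom.sym T hT.1, fun e => by rw [Pi.neg_apply]; exact sg_neg_ne_zero _ (hT.2 e)⟩

lemma topes_eq_off_sep {T1 T2 : U → SignType} (h1 : T1 ∈ Topes L) (h2 : T2 ∈ Topes L)
    {f : U} (hf : f ∉ sep T1 T2) : T1 f = T2 f :=
  sg_eq_of_mul_ne_neg _ _ (h1.2 f) (h2.2 f) (by simpa [mem_sep_iff] using hf)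

end Aux2
section Aux3
set_option linter.unusedSectionVars false
variable {U : Type*} [Fintype U] [DecidableEq U] {L : Set (U → SignType)}
variable {T1 T2 X : U → SignType}

lemma sgl : ∀ a b : SignType, a ≠ 0 → (a * (if b = 0 then a else b) = -1 ↔ b = -a) := by decide
lemma sgm : ∀ a b : SignType, a ≠ 0 →
    ((if b = 0 then a else b) * (if b = 0 then -a else b) = -1 ↔ b = 0) := by decide
lemma sgr : ∀ a b : SignType, a ≠ 0 → ((if b = 0 then -a else b) * (-a) = -1 ↔ b = a) := by decide

lemma comp_apply {Y : U → SignType} {e : U} : comp X Y e = if X e = 0 then Y e else X e := rfl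

lemma sep_left (h1 : T1 ∈ Topes L) (h2 : T2 ∈ Topes L)
    (hX : ∀ f, f ∉ sep T1 T2 → X f = T1 f) :
    sep T1 (comp X T1) = (sep T1 T2).filter (fun f => X f = -(T1 f)) := by
  ext f
  rw [mem_sep_iff, Finset.mem_filter, comp_apply]
  by_cases hf : f ∈ sep T1 T2
  · simp only [hf, true_and]
    exact sgl (T1 f) (X f) (h1.2 f)
  · simp only [hf, false_and, iff_false]
    rw [hX f hf, if_neg (h1.2 f)]
    rw [sg_mul_self (T1 f) (h1.2 f)]
    decide

lemma sep_mid (h1 : T1 ∈ Topes L) (h2 : T2 ∈ Topes L)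
    (hX : ∀ f, f ∉ sep T1 T2 → X f = T1 f) :
    sep (comp X T1) (comp X T2) = (sep T1 T2).filter (fun f => X f = 0) := by
  ext f
  rw [mem_sep_iff, Finset.mem_filter, comp_apply, comp_apply]
  by_cases hf : f ∈ sep T1 T2
  · simp only [hf, true_and]
    rw [sg_eq_neg_of_mul _ _ (mem_sep_iff.mp hf)]
    exact sgm (T1 f) (X f) (h1.2 f)
  · simp only [hf, false_and, iff_false]
    rw [hX f hf, if_neg (h1.2 f), if_neg (h1.2 f)]
    rw [sg_mul_self (T1 f) (h1.2 f)]
    decide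

lemma sep_right (h1 : T1 ∈ Topes L) (h2 : T2 ∈ Topes L)
    (hX : ∀ f, f ∉ sep T1 T2 → X f = T1 f) :
    sep (comp X T2) T2 = (sep T1 T2).filter (fun f => X f = T1 f) := by
  ext f
  rw [mem_sep_iff, Finset.mem_filter, comp_apply]
  by_cases hf : f ∈ sep T1 T2
  · simp only [hf, true_and]
    rw [sg_eq_neg_of_mul _ _ (mem_sep_iff.mp hf)]
    exact sgr (T1 f) (X f) (h1.2 f)
  · simp only [hf, false_and, iff_false]
    rw [hX f hf, ← topes_eq_off_sep h1 h2 hf, if_neg (h1.2 f)]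
    rw [sg_mul_self (T1 f) (h1.2 f)]
    decide

lemma sgtri : ∀ x a : SignType, a ≠ 0 → (¬ x = 0 ↔ (x = -a ∨ x = a)) := by decide
lemma sgdisj : ∀ x a : SignType, a ≠ 0 → x = -a → x = a → False := by decide

lemma sep_card_partition (h1 : T1 ∈ Topes L) :
    ((sep T1 T2).filter fun f => X f = -(T1 f)).card
      + ((sep T1 T2).filter fun f => X f = 0).card
      + ((sep T1 T2).filter fun f => X f = T1 f).card = (sep T1 T2).card := by
  classical
  have hsplit := Finset.card_filter_add_card_filter_not
    (s := sep T1 T2) (p := fun f => X f = 0)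
  have hrest : (sep T1 T2).filter (fun f => ¬ X f = 0)
      = ((sep T1 T2).filter fun f => X f = -(T1 f)) ∪ ((sep T1 T2).filter fun f => X f = T1 f) := by
    rw [← Finset.filter_or]
    apply Finset.filter_congr
    intro f hf
    exact sgtri (X f) (T1 f) (h1.2 f)
  have hdisj : Disjoint ((sep T1 T2).filter fun f => X f = -(T1 f))
      ((sep T1 T2).filter fun f => X f = T1 f) := by
    rw [Finset.disjoint_left]
    intro a ha hb
    rw [Finset.mem_filter] at ha hb
    exact sgdisj (X a) (T1 a) (h1.2 a) ha.2 hb.2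
  rw [hrest, Finset.card_union_of_disjoint hdisj] at hsplit
  omega

end Aux3
section Aux4
set_option linter.unusedSectionVars false
set_option maxHeartbeats 1000000
variable {U : Type*} [Fintype U] [DecidableEq U] {L : Set (U → SignType)}

lemma sg_prod_cases : ∀ a b : SignType, a ≠ 0 → b ≠ 0 → a * b = 1 ∨ a * b = -1 := by decide

lemma sg_norm : ∀ a b y z : SignType, a ≠ 0 → b ≠ 0 → y * z = -(a * b) →
    (y = a ∧ z = -b) ∨ (-y = a ∧ -z = -b) := by decide

lemma sg_sq_ne : ∀ a : SignType, a ≠ 0 → a * a ≠ -1 := by decide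

lemma walk_of_sep (hom : IsOM L) (hsimple : SimpleSV L) :
    ∀ n : ℕ, ∀ T1 T2 : U → SignType, ∀ (h1 : T1 ∈ Topes L) (h2 : T2 ∈ Topes L),
      (sep T1 T2).card = n →
      ∃ w : ((cubeGraph U).induce (TopeSet L)).Walk
          ⟨tb T1, mem_topeset h1⟩ ⟨tb T2, mem_topeset h2⟩, w.length = n := by
  intro n
  induction n using Nat.strong_induction_on with
  | _ n ih =>
  intro T1 T2 h1 h2 hcard
  set S := sep T1 T2 with hSdef
  rcases Nat.eq_zero_or_pos n with hn0 | hnpos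
  · -- n = 0 : T1 = T2
    subst hn0
    have hempty : S = ∅ := Finset.card_eq_zero.mp hcard
    have hT : T1 = T2 := by
      funext e
      exact topes_eq_off_sep h1 h2 (by simp [← hSdef, hempty])
    have hv : (⟨tb T1, mem_topeset h1⟩ : TopeSet L) = ⟨tb T2, mem_topeset h2⟩ :=
      Subtype.ext (show tb T1 = tb T2 from congrArg tb hT)
    exact ⟨SimpleGraph.Walk.nil.copy rfl hv, by simp⟩
  · -- n ≥ 1
    by_cases hgood : ∃ Z ∈ L, (∃ e ∈ S, Z e = 0) ∧
        (∀ f, f ∉ S → Z f = T1 f) ∧ ∃ g ∈ S, Z g ≠ 0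
    · -- progress case
      obtain ⟨Z, hZL, ⟨e, he, hZe⟩, hZoff, g, hg, hZg⟩ := hgood
      set P := comp Z T1 with hP
      set Q := comp Z T2 with hQ
      have hPt : P ∈ Topes L := comp_tope hom hZL h1
      have hQt : Q ∈ Topes L := comp_tope hom hZL h2
      have hsepl := sep_left (T2 := T2) h1 h2 hZoff
      have hsepm := sep_mid (T2 := T2) h1 h2 hZoff
      have hsepr := sep_right (T2 := T2) h1 h2 hZoff
      have hsum := sep_card_partition (T2 := T2) (X := Z) h1
      have hCle : (S.filter (fun f => Z f = -(T1 f))).card < n := by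
        have hne : e ∉ S.filter (fun f => Z f = -(T1 f)) := by
          simp only [Finset.mem_filter, hZe]
          rintro ⟨-, h⟩
          exact sg_neg_ne_zero _ (h1.2 e) h.symm
        have hsub : S.filter (fun f => Z f = -(T1 f)) ⊆ S.erase e :=
          fun x hx => Finset.mem_erase.mpr ⟨fun hxe => hne (hxe ▸ hx), Finset.filter_subset _ _ hx⟩
        calc (S.filter (fun f => Z f = -(T1 f))).card ≤ (S.erase e).card :=
              Finset.card_le_card hsub
          _ < S.card := Finset.card_erase_lt_of_mem he
          _ = n := hcard
      have hAle : (S.filter (fun f => Z f = T1 f)).card < n := by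
        have hne : e ∉ S.filter (fun f => Z f = T1 f) := by
          simp only [Finset.mem_filter, hZe]
          rintro ⟨-, h⟩
          exact h1.2 e h.symm
        have hsub : S.filter (fun f => Z f = T1 f) ⊆ S.erase e :=
          fun x hx => Finset.mem_erase.mpr ⟨fun hxe => hne (hxe ▸ hx), Finset.filter_subset _ _ hx⟩
        calc (S.filter (fun f => Z f = T1 f)).card ≤ (S.erase e).card :=
              Finset.card_le_card hsub
          _ < S.card := Finset.card_erase_lt_of_mem he
          _ = n := hcard
      have hBle : (S.filter (fun f => Z f = 0)).card < n := by
        have hgnot : g ∉ S.filter (fun f => Z f = 0) := by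
          simp only [Finset.mem_filter]
          rintro ⟨-, h⟩
          exact hZg h
        have hsub : S.filter (fun f => Z f = 0) ⊆ S.erase g :=
          fun x hx => Finset.mem_erase.mpr ⟨fun hxg => hgnot (hxg ▸ hx), Finset.filter_subset _ _ hx⟩
        calc (S.filter (fun f => Z f = 0)).card ≤ (S.erase g).card := Finset.card_le_card hsub
          _ < S.card := Finset.card_erase_lt_of_mem hg
          _ = n := hcard
      obtain ⟨w1, hw1⟩ := ih (sep T1 P).card (by rw [hsepl, ← hSdef]; exact hCle) T1 P h1 hPt rfl
      obtain ⟨w2, hw2⟩ := ih (sep P Q).card (by rw [hsepm, ← hSdef]; exact hBle) P Q hPt hQt rfl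
      obtain ⟨w3, hw3⟩ := ih (sep Q T2).card (by rw [hsepr, ← hSdef]; exact hAle) Q T2 hQt h2 rfl
      refine ⟨w1.append (w2.append w3), ?_⟩
      rw [SimpleGraph.Walk.length_append, SimpleGraph.Walk.length_append, hw1, hw2, hw3,
        hsepl, hsepm, hsepr, ← hSdef]
      rw [← hSdef] at hsum
      omega
    · push_neg at hgood
      rcases eq_or_lt_of_le (Nat.succ_le_of_lt hnpos) with hn1 | hn2
      · -- n = 1 : adjacency
        have hadj : ((cubeGraph U).induce (TopeSet L)).Adj
            ⟨tb T1, mem_topeset h1⟩ ⟨tb T2, mem_topeset h2⟩ := by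
          show hDist (tb T1) (tb T2) = 1
          rw [hDist_eq_sep_card h1.2 h2.2, ← hSdef, hcard]; omega
        exact ⟨SimpleGraph.Walk.cons hadj SimpleGraph.Walk.nil, by
          simp only [SimpleGraph.Walk.length_cons, SimpleGraph.Walk.length_nil]; omega⟩
      · -- n ≥ 2 : contradiction with simplicity
        exfalso
        obtain ⟨e, he, f, hf, hef⟩ := Finset.one_lt_card.mp (by omega : 1 < S.card)
        have heS : T1 e * T2 e = -1 := mem_sep_iff.mp he
        have hfS : T1 f * T2 f = -1 := mem_sep_iff.mp hf
        obtain ⟨Z, hZL, hZe, hZc⟩ := hom.se T1 h1.1 T2 h2.1 e heS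
        have hZoff : ∀ h, h ∉ S → Z h = T1 h := by
          intro h hh
          rw [hZc h (by simpa [hSdef, mem_sep_iff] using hh), comp_apply, if_neg (h1.2 h)]
        have hZ0 : ∀ g ∈ S, Z g = 0 := hgood Z hZL ⟨e, he, hZe⟩ hZoff
        obtain ⟨Y0, hY0L, hY0⟩ : ∃ Y ∈ L, Y e * Y f = -(T1 e * T1 f) := by
          rcases sg_prod_cases (T1 e) (T1 f) (h1.2 e) (h1.2 f) with h | h
          · obtain ⟨Y, hYL, hY⟩ := (hsimple.2 e f hef).2
            exact ⟨Y, hYL, by rw [h, hY]⟩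
          · obtain ⟨Y, hYL, hY⟩ := (hsimple.2 e f hef).1
            exact ⟨Y, hYL, by rw [h, hY]; decide⟩
        obtain ⟨Y, hYL, hYe, hYf⟩ : ∃ Y ∈ L, Y e = T1 e ∧ Y f = -(T1 f) := by
          rcases sg_norm (T1 e) (T1 f) (Y0 e) (Y0 f) (h1.2 e) (h1.2 f) hY0 with ⟨ha, hb⟩ | ⟨ha, hb⟩
          · exact ⟨Y0, hY0L, ha, hb⟩
          · exact ⟨-Y0, hom.sym Y0 hY0L, ha, hb⟩
        set V := comp Z Y with hV
        have hVL : V ∈ L := hom.c Z hZL Y hYL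
        have hVe : V e = T1 e := by rw [hV, comp_apply, if_pos hZe, hYe]
        have hVf : V f = -(T1 f) := by rw [hV, comp_apply, if_pos (hZ0 f hf), hYf]
        have hVoff : ∀ h, h ∉ S → V h = T1 h := by
          intro h hh
          rw [hV, comp_apply, if_neg (by rw [hZoff h hh]; exact h1.2 h)]
          exact hZoff h hh
        have hTV : T1 f * V f = -1 := by rw [hVf]; exact sg_mul_neg_self _ (h1.2 f)
        obtain ⟨W, hWL, hWf, hWc⟩ := hom.se T1 h1.1 V hVL f hTV
        have hWoff : ∀ h, h ∉ S → W h = T1 h := by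
          intro h hh
          rw [hWc h (by rw [hVoff h hh]; exact sg_sq_ne _ (h1.2 h)), comp_apply,
            if_neg (h1.2 h)]
        have hWe : W e = T1 e := by
          rw [hWc e (by rw [hVe]; exact sg_sq_ne _ (h1.2 e)), comp_apply, if_neg (h1.2 e)]
        have : W e = 0 := hgood W hWL ⟨f, hf, hWf⟩ hWoff e he
        exact h1.2 e (hWe.symm.trans this)

end Aux4
section Aux5
set_option linter.unusedSectionVars false
variable {U : Type*} [Fintype U] [DecidableEq U] {L : Set (U → SignType)}

lemma hDist_self (x : U → Bool) : hDist x x = 0 := by simp [hDist]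

lemma hDist_triangle (x y z : U → Bool) : hDist x z ≤ hDist x y + hDist y z := by
  unfold hDist
  refine le_trans (Finset.card_le_card ?_) (Finset.card_union_le _ _)
  intro i hi
  simp only [Finset.mem_filter, Finset.mem_union, Finset.mem_univ, true_and] at *
  by_contra hc
  push_neg at hc
  exact hi (hc.1.trans hc.2)

lemma hDist_le_length {A : Set (U → Bool)} :
    ∀ {u v : A} (w : ((cubeGraph U).induce A).Walk u v), hDist u.1 v.1 ≤ w.length := by
  intro u v w
  induction w with
  | nil => simp [hDist]
  | @cons a b c h p ih =>
    have hab : hDist a.1 b.1 = 1 := h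
    calc hDist a.1 c.1 ≤ hDist a.1 b.1 + hDist b.1 c.1 := hDist_triangle _ _ _
      _ ≤ 1 + p.length := by rw [hab]; omega
      _ = (SimpleGraph.Walk.cons h p).length := by
          rw [SimpleGraph.Walk.length_cons]; omega

lemma tope_dist (hom : IsOM L) (hsimple : SimpleSV L) {T1 T2 : U → SignType}
    (h1 : T1 ∈ Topes L) (h2 : T2 ∈ Topes L) :
    ((cubeGraph U).induce (TopeSet L)).dist ⟨tb T1, mem_topeset h1⟩ ⟨tb T2, mem_topeset h2⟩
      = hDist (tb T1) (tb T2) := by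
  obtain ⟨w, hw⟩ := walk_of_sep hom hsimple (sep T1 T2).card T1 T2 h1 h2 rfl
  apply le_antisymm
  · calc ((cubeGraph U).induce (TopeSet L)).dist _ _ ≤ w.length := SimpleGraph.dist_le w
      _ = (sep T1 T2).card := hw
      _ = hDist (tb T1) (tb T2) := (hDist_eq_sep_card h1.2 h2.2).symm
  · obtain ⟨p, hp⟩ := SimpleGraph.Reachable.exists_walk_length_eq_dist ⟨w⟩
    calc hDist (tb T1) (tb T2) ≤ p.length := hDist_le_length p
      _ = _ := hp

lemma exists_tope (hom : IsOM L) (hne : L.Nonempty) (hsimple : SimpleSV L) :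
    ∃ T, T ∈ Topes L := by
  obtain ⟨X0, hX0⟩ := hne
  suffices h : ∀ k (X : U → SignType), X ∈ L →
      (Finset.univ.filter fun e => X e = 0).card ≤ k → ∃ T, T ∈ Topes L by
    exact h _ X0 hX0 le_rfl
  intro k
  induction k with
  | zero =>
    intro X hX h0
    refine ⟨X, hX, fun e he => ?_⟩
    have hemp : (Finset.univ.filter fun e => X e = 0) = ∅ :=
      Finset.card_eq_zero.mp (Nat.le_zero.mp h0)
    have : e ∈ (Finset.univ.filter fun e => X e = 0) :=
      Finset.mem_filter.mpr ⟨Finset.mem_univ e, he⟩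
    rw [hemp] at this
    exact absurd this (Finset.notMem_empty e)
  | succ k ih =>
    intro X hX h0
    by_cases hz : ∃ e, X e = 0
    · obtain ⟨e, he⟩ := hz
      obtain ⟨Y, hYL, hYe⟩ := hsimple.1 e 1
      refine ih (comp X Y) (hom.c X hX Y hYL) ?_
      have hsub : (Finset.univ.filter fun f => comp X Y f = 0)
          ⊆ (Finset.univ.filter fun f => X f = 0).erase e := by
        intro a ha
        rw [Finset.mem_filter] at ha
        have ha' := ha.2
        rw [comp_apply] at ha'
        refine Finset.mem_erase.mpr ⟨?_, ?_⟩
        · rintro rfl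
          rw [if_pos he, hYe] at ha'
          exact one_ne_zero ha'
        · refine Finset.mem_filter.mpr ⟨Finset.mem_univ a, ?_⟩
          by_contra hc
          rw [if_neg hc] at ha'
          exact hc ha'
      have hmem : e ∈ (Finset.univ.filter fun f => X f = 0) :=
        Finset.mem_filter.mpr ⟨Finset.mem_univ e, he⟩
      calc (Finset.univ.filter fun f => comp X Y f = 0).card
          ≤ ((Finset.univ.filter fun f => X f = 0).erase e).card := Finset.card_le_card hsub
        _ = (Finset.univ.filter fun f => X f = 0).card - 1 := Finset.card_erase_of_mem hmem
        _ ≤ k := by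
            have : 1 ≤ (Finset.univ.filter fun f => X f = 0).card :=
              Finset.card_pos.mpr ⟨e, hmem⟩
            omega
    · exact ⟨X, hX, fun e h => hz ⟨e, h⟩⟩

lemma tb_neg {T : U → SignType} (h : ∀ e, T e ≠ 0) : tb (-T) = fun i => !(tb T i) := by
  funext i
  have hi := h i
  show decide (-(T i) = 1) = !decide (T i = 1)
  revert hi
  generalize T i = s
  revert s
  decide

lemma hDist_add_compl (a x : U → Bool) :
    hDist a x + hDist x (fun i => !(a i)) = Fintype.card U := by
  unfold hDist
  have h2 : (Finset.univ.filter fun i => x i ≠ !(a i))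
      = Finset.univ.filter fun i => ¬(a i ≠ x i) := by
    apply Finset.filter_congr
    intro i _
    revert a x
    intro a x
    cases a i <;> cases x i <;> simp
  rw [h2, Finset.card_filter_add_card_filter_not, Finset.card_univ]

end Aux5
/-- The tope graph of a (simple) oriented matroid is an antipodal partial
cube: it is an isometric subgraph of the hypercube, the negation of every tope is a tope,
and the negation is the antipode. -/
theorem stmt9 [Fintype U] [DecidableEq U] (L : Set (U → SignType))
    (hom : IsOM L) (hne : L.Nonempty) (hsimple : SimpleSV L) :
    IsPartialCube (TopeSet L) ∧
    ∀ T ∈ Topes L, -T ∈ Topes L ∧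
      ∀ x ∈ TopeSet L,
        dIn (TopeSet L) (tb T) x + dIn (TopeSet L) x (tb (-T)) =
          dIn (TopeSet L) (tb T) (tb (-T)) := by

  obtain ⟨T0, hT0⟩ := exists_tope hom hne hsimple
  have hdIn : ∀ T1 T2 : U → SignType, T1 ∈ Topes L → T2 ∈ Topes L →
      dIn (TopeSet L) (tb T1) (tb T2) = hDist (tb T1) (tb T2) := by
    intro T1 T2 h1 h2
    unfold dIn
    rw [dif_pos ⟨mem_topeset h1, mem_topeset h2⟩]
    exact tope_dist hom hsimple h1 h2
  constructor
  · constructor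
    · -- connectedness
      rw [SimpleGraph.connected_iff]
      refine ⟨?_, ⟨⟨tb T0, mem_topeset hT0⟩⟩⟩
      intro u v
      obtain ⟨Tu, hTu, hu⟩ := u.2
      obtain ⟨Tv, hTv, hv⟩ := v.2
      have hu' : u = ⟨tb Tu, mem_topeset hTu⟩ := Subtype.ext hu.symm
      have hv' : v = ⟨tb Tv, mem_topeset hTv⟩ := Subtype.ext hv.symm
      rw [hu', hv']
      obtain ⟨w, -⟩ := walk_of_sep hom hsimple (sep Tu Tv).card Tu Tv hTu hTv rfl
      exact ⟨w⟩
    · intro x hx y hy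
      obtain ⟨Tx, hTx, rfl⟩ := hx
      obtain ⟨Ty, hTy, rfl⟩ := hy
      exact hdIn _ _ hTx hTy
  · intro T hT
    have hnT : -T ∈ Topes L := neg_tope hom hT
    refine ⟨hnT, ?_⟩
    intro x hx
    obtain ⟨Tx, hTx, rfl⟩ := hx
    rw [hdIn T Tx hT hTx, hdIn Tx (-T) hTx hnT, hdIn T (-T) hT hnT, tb_neg hT.2]
    have h1 := hDist_add_compl (tb T) (tb Tx)
    have h2 := hDist_add_compl (tb T) (tb T)
    rw [hDist_self] at h2
    omega
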